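/- Let n ≥ 1 and let h : ℝ^n → ℝ be comonotonically additive and continuous. Then h = C_v, the signed Choquet integral with respect to the signed capacity v on [n] defined by v(S) = h(1_S), where 1_S is the characteristic vector of S ⊆ [n]. -/

import Mathlib

open Finset

/-- The Choquet-type sum computed with a given permutation `π`:
`∑ i (v({π(i),…,π(n)}) − v({π(i+1),…,π(n)})) x_{π(i)}`. -/
noncomputable def choquetSum {n : ℕ} (v : Finset (Fin n) → ℝ) (π : Equiv.Perm (Fin n))
    (x : Fin n → ℝ) : ℝ :=
  ∑ i : Fin n,
    (v ((Finset.univ.filter fun k => i ≤ k).image π) -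
      v ((Finset.univ.filter fun k => i < k).image π)) * x (π i)

/-- The signed (discrete) Choquet integral of `x` w.r.t. the set function `v`,
computed with a sorting permutation of `x`. -/
noncomputable def signedChoquet {n : ℕ} (v : Finset (Fin n) → ℝ) (x : Fin n → ℝ) : ℝ :=
  choquetSum v (Tuple.sort x) x

/-- Two vectors are comonotonic. -/
def Comonotone' {n : ℕ} (x x' : Fin n → ℝ) : Prop :=
  ∀ i j, 0 ≤ (x i - x j) * (x' i - x' j)

/-- Characteristic (indicator) vector of `S`. -/
def indVec {n : ℕ} (S : Finset (Fin n)) : Fin n → ℝ := fun i => if i ∈ S then 1 else 0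

/-- The unanimity game `v_S`. -/
def unanimity {n : ℕ} (S T : Finset (Fin n)) : ℝ := if S ⊆ T then 1 else 0

/-- The Möbius transform of a set function. -/
noncomputable def mobius {n : ℕ} (v : Finset (Fin n) → ℝ) (S : Finset (Fin n)) : ℝ :=
  ∑ T ∈ S.powerset, (-1 : ℝ) ^ (S.card - T.card) * v T


section hom
variable {n : ℕ} {h : (Fin n → ℝ) → ℝ}
  (hadd : ∀ x x' : Fin n → ℝ, Comonotone' x x' → h (x + x') = h x + h x')

include hadd

lemma h_zero : h 0 = 0 := by
  have := hadd 0 0 (fun i j => by simp)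
  simp at this
  linarith

lemma h_nat_smul (k : ℕ) (y : Fin n → ℝ) : h ((k : ℝ) • y) = (k : ℝ) * h y := by
  induction k with
  | zero => simpa using h_zero hadd
  | succ k ih =>
    have hc : Comonotone' ((k : ℝ) • y) y := by
      intro i j
      have : ((k : ℝ) • y) i - ((k : ℝ) • y) j = (k : ℝ) * (y i - y j) := by
        simp [Pi.smul_apply, smul_eq_mul]; ring
      rw [this]
      nlinarith [sq_nonneg (y i - y j), Nat.cast_nonneg (α := ℝ) k]
    have : ((k + 1 : ℕ) : ℝ) • y = (k : ℝ) • y + y := by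
      push_cast
      rw [add_smul, one_smul]
    rw [this, hadd _ _ hc, ih]
    push_cast
    ring

lemma h_div_nat_smul (a b : ℕ) (hb : 0 < b) (y : Fin n → ℝ) :
    h (((a : ℝ) / b) • y) = ((a : ℝ) / b) * h y := by
  have hb' : (b : ℝ) ≠ 0 := Nat.cast_ne_zero.2 hb.ne'
  have key : h y = (b : ℝ) * h ((b : ℝ)⁻¹ • y) := by
    rw [← h_nat_smul hadd b ((b : ℝ)⁻¹ • y), smul_smul, mul_inv_cancel₀ hb', one_smul]
  have : ((a : ℝ) / b) • y = (a : ℝ) • ((b : ℝ)⁻¹ • y) := by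
    rw [smul_smul]; ring_nf
  rw [this, h_nat_smul hadd a, key]
  field_simp

lemma h_nonneg_smul (hcont : Continuous h) {t : ℝ} (ht : 0 ≤ t) (y : Fin n → ℝ) :
    h (t • y) = t * h y := by
  set C : Set ℝ := {s : ℝ | h (s • y) = s * h y} ∪ Set.Iic 0 with hC
  have hclosed : IsClosed C := by
    apply IsClosed.union
    · exact isClosed_eq (hcont.comp (continuous_id.smul continuous_const))
        (continuous_id.mul continuous_const)
    · exact isClosed_Iic
  have hsub : Set.range ((↑) : ℚ → ℝ) ⊆ C := by
    rintro _ ⟨q, rfl⟩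
    rcases le_or_gt q 0 with hq | hq
    · right
      simpa using (Rat.cast_nonpos (K := ℝ)).2 hq
    · left
      have hnum : (0 : ℤ) ≤ q.num := Rat.num_nonneg.2 hq.le
      have hcast : (q : ℝ) = (q.num.toNat : ℝ) / (q.den : ℝ) := by
        rw [Rat.cast_def]
        congr 1
        exact_mod_cast (Int.toNat_of_nonneg hnum).symm
      show h ((q : ℝ) • y) = (q : ℝ) * h y
      rw [hcast]
      exact h_div_nat_smul hadd q.num.toNat q.den q.pos y
  have huniv : ∀ s : ℝ, s ∈ C := by
    have hdense : Dense (Set.range ((↑) : ℚ → ℝ)) := Rat.denseRange_cast (𝕜 := ℝ)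
    intro s
    have : closure (Set.range ((↑) : ℚ → ℝ)) ⊆ C := hclosed.closure_subset_iff.2 hsub
    exact this (hdense.closure_eq ▸ Set.mem_univ s)
  rcases (huniv t) with hmem | hmem
  · exact hmem
  · have ht0 : t = 0 := le_antisymm hmem ht
    subst ht0
    simpa using h_zero hadd

end hom

section more
variable {n : ℕ} {h : (Fin n → ℝ) → ℝ}
  (hadd : ∀ x x' : Fin n → ℝ, Comonotone' x x' → h (x + x') = h x + h x')

include hadd

lemma h_const_smul (hcont : Continuous h) (c : ℝ) :
    h (c • indVec (univ : Finset (Fin n))) = c * h (indVec univ) := by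
  rcases le_or_gt 0 c with hc | hc
  · exact h_nonneg_smul hadd hcont hc _
  · have hcomp : Comonotone' (c • indVec (univ : Finset (Fin n)))
        ((-c) • indVec (univ : Finset (Fin n))) := by
      intro i j
      simp [indVec]
    have hsum : c • indVec (univ : Finset (Fin n)) + (-c) • indVec univ = 0 := by
      rw [← add_smul]; simp
    have := hadd _ _ hcomp
    rw [hsum, h_zero hadd, h_nonneg_smul hadd hcont (by linarith : (0:ℝ) ≤ -c)] at this
    linarith

end more

lemma abel_sum (a b : ℕ → ℝ) :
    ∀ k, 1 ≤ k → ∑ i ∈ Finset.range k, (a i - a (i + 1)) * b i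
      = (∑ i ∈ Finset.range k, a i * (if i = 0 then b 0 else b i - b (i - 1)))
        - a k * b (k - 1) := by
  intro k
  induction k with
  | zero => omega
  | succ k ih =>
    intro _
    rcases Nat.eq_zero_or_pos k with rfl | hk
    · simp [Finset.sum_range_one]; ring
    · rw [Finset.sum_range_succ, Finset.sum_range_succ, ih hk]
      have hk0 : k ≠ 0 := hk.ne'
      simp only [hk0, if_false, Nat.add_sub_cancel]
      ring


/-- A comonotonically additive continuous function is the signed
Choquet integral w.r.t. the signed capacity `S ↦ h(1_S)`. -/
theorem eq_signedChoquet_of_comonotoneAdditive_continuous {n : ℕ} (hn : 1 ≤ n)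
    (h : (Fin n → ℝ) → ℝ)
    (hadd : ∀ x x' : Fin n → ℝ, Comonotone' x x' → h (x + x') = h x + h x')
    (hcont : Continuous h) :
    ∀ x : Fin n → ℝ, h x = signedChoquet (fun S => h (indVec S)) x := by
  intro x
  set π := Tuple.sort x with hπ
  have hmx : Monotone (x ∘ π) := Tuple.monotone_sort x
  -- definitions
  set A : ℕ → Finset (Fin n) := fun m => (univ.filter fun k : Fin n => m ≤ (k : ℕ)).image π
    with hA
  have hmn : ∀ m : ℕ, m < n → m % n = m := fun m hm => Nat.mod_eq_of_lt hm
  set b : ℕ → ℝ := fun m => x (π ⟨m % n, Nat.mod_lt m (by omega)⟩) with hb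
  set t : ℕ → ℝ := fun m => if m = 0 then b 0 else b m - b (m - 1) with ht
  set g : ℕ → Fin n → ℝ := fun m => t m • indVec (A m) with hg
  set v : Finset (Fin n) → ℝ := fun S => h (indVec S) with hv
  -- membership in A
  have hmemA : ∀ (m : ℕ) (j : Fin n), j ∈ A m ↔ m ≤ ((π.symm j : Fin n) : ℕ) := by
    intro m j
    simp only [hA, mem_image, mem_filter, mem_univ, true_and]
    constructor
    · rintro ⟨k, hk, rfl⟩; simpa using hk
    · intro hm; exact ⟨π.symm j, hm, π.apply_symm_apply j⟩
  have hindA : ∀ (m : ℕ) (a : Fin n),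
      indVec (A m) (π a) = if m ≤ (a : ℕ) then 1 else 0 := by
    intro m a
    simp [indVec, hmemA m (π a)]
  -- b at small indices
  have hbval : ∀ (m : ℕ) (hm : m < n), b m = x (π ⟨m, hm⟩) := by
    intro m hm
    simp only [hb]
    congr 2
    exact Fin.ext (hmn m hm)
  -- t nonneg for 1 ≤ m < n
  have htnn : ∀ m : ℕ, 1 ≤ m → m < n → 0 ≤ t m := by
    intro m h1 h2
    simp only [ht, if_neg (by omega : m ≠ 0)]
    rw [hbval m h2, hbval (m-1) (by omega)]
    have := hmx (a := ⟨m-1, by omega⟩) (b := ⟨m, h2⟩) (by simp [Fin.le_def])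
    simpa using this
  -- monotone-along-π property
  set M : (Fin n → ℝ) → Prop := fun y => ∀ a c : Fin n, a ≤ c → y (π a) ≤ y (π c) with hM
  have hMg : ∀ m : ℕ, m < n → M (g m) := by
    intro m hm a c hac
    simp only [hg, Pi.smul_apply, smul_eq_mul, hindA]
    rcases Nat.eq_zero_or_pos m with rfl | hm1
    · simp
    · have htm := htnn m hm1 hm
      rcases le_or_gt m (a : ℕ) with h1 | h1
      · rw [if_pos h1, if_pos (le_trans h1 (Fin.le_def.1 hac))]
      · rw [if_neg (not_le.2 h1)]
        rcases le_or_gt m (c : ℕ) with h2 | h2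
        · rw [if_pos h2]; simpa using htm
        · rw [if_neg (not_le.2 h2)]
  have hMadd : ∀ y z, M y → M z → M (y + z) := by
    intro y z hy hz a c hac
    exact add_le_add (hy a c hac) (hz a c hac)
  have hMzero : M 0 := by intro a c _; simp
  have hMcomono : ∀ y z, M y → M z → Comonotone' y z := by
    intro y z hy hz i j
    rcases le_total (π.symm i) (π.symm j) with hij | hij
    · have h1 := hy _ _ hij
      have h2 := hz _ _ hij
      rw [π.apply_symm_apply, π.apply_symm_apply] at h1 h2
      nlinarith
    · have h1 := hy _ _ hij
      have h2 := hz _ _ hij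
      rw [π.apply_symm_apply, π.apply_symm_apply] at h1 h2
      nlinarith
  -- additivity over the layers
  have hMsum : ∀ k : ℕ, k ≤ n → M (∑ m ∈ Finset.range k, g m) := by
    intro k
    induction k with
    | zero => intro _; simpa using hMzero
    | succ k ih =>
      intro hk
      rw [Finset.sum_range_succ]
      exact hMadd _ _ (ih (by omega)) (hMg k (by omega))
  have hsplit : ∀ k : ℕ, k ≤ n →
      h (∑ m ∈ Finset.range k, g m) = ∑ m ∈ Finset.range k, h (g m) := by
    intro k
    induction k with
    | zero => intro _; simpa using h_zero hadd
    | succ k ih =>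
      intro hk
      rw [Finset.sum_range_succ, Finset.sum_range_succ, ← ih (by omega),
        hadd _ _ (hMcomono _ _ (hMsum k (by omega)) (hMg k (by omega)))]
  -- value of h on each layer
  have hA0 : A 0 = univ := by
    ext j; simp [hmemA]
  have hlayer : ∀ m : ℕ, m < n → h (g m) = t m * v (A m) := by
    intro m hm
    rcases Nat.eq_zero_or_pos m with rfl | hm1
    · rw [hg]
      simp only [hA0]
      exact h_const_smul hadd hcont (t 0)
    · exact h_nonneg_smul hadd hcont (htnn m hm1 hm) _
  -- decomposition
  have hdecomp : ∑ m ∈ Finset.range n, g m = x := by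
    funext j
    set p : ℕ := ((π.symm j : Fin n) : ℕ) with hp
    have hpn : p < n := (π.symm j).isLt
    have htel : ∀ q : ℕ, ∑ m ∈ Finset.range (q + 1), t m = b q := by
      intro q
      induction q with
      | zero => simp [ht]
      | succ q ih =>
        rw [Finset.sum_range_succ, ih, ht]
        simp only [Nat.succ_ne_zero, if_false, Nat.add_sub_cancel]
        ring
    have happ : (∑ m ∈ Finset.range n, g m) j = ∑ m ∈ Finset.range n, g m j := by
      simp
    rw [happ]
    have hgj : ∀ m : ℕ, g m j = if m ≤ p then t m else 0 := by
      intro m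
      simp only [hg, Pi.smul_apply, smul_eq_mul, indVec, hmemA m j, ← hp]
      split <;> simp
    calc ∑ m ∈ Finset.range n, g m j
        = ∑ m ∈ Finset.range n, (if m ≤ p then t m else 0) := by
          exact Finset.sum_congr rfl fun m _ => hgj m
      _ = ∑ m ∈ Finset.range (p + 1), t m := by
          rw [← Finset.sum_filter]
          congr 1
          ext m
          simp [Nat.lt_succ_iff]
          omega
      _ = b p := htel p
      _ = x j := by
          rw [hbval p hpn]
          have : (⟨p, hpn⟩ : Fin n) = π.symm j := Fin.ext rfl
          rw [this, π.apply_symm_apply]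
  -- rewrite choquetSum
  have hvAn : v (A n) = 0 := by
    have : A n = ∅ := by
      ext j
      simp [hmemA]
    rw [this]
    have : indVec (∅ : Finset (Fin n)) = 0 := by funext j; simp [indVec]
    simp only [hv, this]
    exact h_zero hadd
  have hchoq : choquetSum v π x
      = ∑ i ∈ Finset.range n, (v (A i) - v (A (i + 1))) * b i := by
    rw [choquetSum, ← Fin.sum_univ_eq_sum_range]
    apply Finset.sum_congr rfl
    intro i _
    have e1 : (univ.filter fun k => i ≤ k).image ⇑π = A (i : ℕ) := by
      congr 1
    have e2 : (univ.filter fun k => i < k).image ⇑π = A ((i : ℕ) + 1) := by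
      congr 1
    have e3 : x (π i) = b (i : ℕ) := by
      rw [hbval _ i.isLt]
    rw [e1, e2, e3]
  -- conclude
  rw [signedChoquet, ← hπ, hchoq, ← hdecomp, hsplit n le_rfl,
    abel_sum (fun m => v (A m)) b n hn, hvAn]
  simp only [zero_mul, sub_zero]
  apply Finset.sum_congr rfl
  intro m hm
  rw [hlayer m (Finset.mem_range.1 hm), ht]
  ring
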